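/- Let R be a commutative ring with identity, S a multiplicative subset of R, and I an ideal of R with I ∩ S = ∅. Then the following are equivalent: (1) there exists s ∈ S such that the colon ideal I : s is a finite intersection of S-primary ideals of R; (2) there exists s' ∈ S such that I : s' is a finite intersection of primary ideals of R; (3) the extension I·R_S is a finite intersection of primary ideals of the localization R_S, and Sat_S(I) = I : t for some t ∈ S. -/

import Mathlib

/-- `Q` is an `S`-primary ideal: `Q` is disjoint from `S` and there is `s ∈ S` such that
`ab ∈ Q` implies `sa ∈ Q` or `sb ∈ √Q`. -/
def IsSPrimary {R : Type*} [CommRing R] (S : Set R) (Q : Ideal R) : Prop :=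
  Disjoint (Q : Set R) S ∧
    ∃ s ∈ S, ∀ a b : R, a * b ∈ Q → s * a ∈ Q ∨ s * b ∈ Q.radical

open Ideal

section helpers
variable {R : Type*} [CommRing R] (S : Submonoid R)

private lemma algMem_iff (I : Ideal R) (x : R) :
    algebraMap R (Localization S) x ∈ I.map (algebraMap R (Localization S)) ↔
      ∃ t ∈ S, t * x ∈ I := by
  rw [← IsLocalization.mk'_one (M := S) (Localization S) x,
    IsLocalization.mk'_mem_map_algebraMap_iff S (S := Localization S) I x 1]

private lemma unit_cancel (J : Ideal (Localization S)) (z : Localization S) (u : S)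
    (h : z * algebraMap R (Localization S) u ∈ J) : z ∈ J := by
  have hu := IsLocalization.map_units (M := S) (Localization S) u
  rwa [mul_comm, Ideal.unit_mul_mem_iff_mem J hu] at h

private lemma mul_prod_mem {m : ℕ} (Q : Ideal R) (f : Fin m → R) (x : R) (i : Fin m)
    (h : x * f i ∈ Q) : x * ∏ j, f j ∈ Q := by
  rw [← Finset.mul_prod_erase Finset.univ f (Finset.mem_univ i), ← mul_assoc]
  exact Q.mul_mem_right _ h

private lemma radical_disjoint {Q : Ideal R} (h : Disjoint (Q : Set R) (S : Set R))
    {w : R} (hw : w ∈ S) : w ∉ Q.radical := by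
  intro hmem
  obtain ⟨n, hn⟩ := Ideal.mem_radical_iff.mp hmem
  exact Set.disjoint_left.mp h hn (pow_mem hw n)

private lemma map_isPrimary {Q : Ideal R} (hQ : IsSPrimary (S : Set R) Q) :
    (Q.map (algebraMap R (Localization S))).IsPrimary := by
  obtain ⟨hdisj, w, hwS, hw⟩ := hQ
  set φ := algebraMap R (Localization S) with hφ
  rw [Ideal.isPrimary_iff]
  constructor
  · intro htop
    have h1 : φ 1 ∈ Q.map φ := by rw [htop]; trivial
    obtain ⟨t, htS, htQ⟩ := (algMem_iff S Q 1).mp h1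
    exact Set.disjoint_left.mp hdisj (by simpa using htQ) htS
  · intro a b hab
    obtain ⟨⟨x, u⟩, hxu⟩ := IsLocalization.surj (M := S) a
    obtain ⟨⟨y, v⟩, hyv⟩ := IsLocalization.surj (M := S) b
    have hxy : φ (x * y) ∈ Q.map φ := by
      have heq : (a * b) * φ (↑u * ↑v) = φ (x * y) := by
        rw [_root_.map_mul, _root_.map_mul,
          show a * b * (φ ↑u * φ ↑v) = (a * φ ↑u) * (b * φ ↑v) by ring, hxu, hyv]
      rw [← heq]
      exact Ideal.mul_mem_right _ _ hab
    obtain ⟨t, htS, htQ⟩ := (algMem_iff S Q (x * y)).mp hxy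
    have hty : (t * x) * y ∈ Q := by rwa [mul_assoc]
    rcases hw (t * x) y hty with h | h
    · left
      apply unit_cancel S _ a (u * ⟨w * t, mul_mem hwS htS⟩)
      have hc : ((u * (⟨w * t, mul_mem hwS htS⟩ : S) : S) : R) = ↑u * (w * t) := rfl
      have heq : a * φ (↑u * (w * t)) = φ (x * (w * t)) := by
        rw [_root_.map_mul, _root_.map_mul, ← mul_assoc, hxu, ← _root_.map_mul, ← _root_.map_mul, mul_comm x]
      rw [hc, heq]
      have : x * (w * t) ∈ Q := by rwa [show x * (w * t) = w * (t * x) by ring]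
      exact Ideal.mem_map_of_mem _ this
    · right
      obtain ⟨n, hn⟩ := Ideal.mem_radical_iff.mp h
      apply unit_cancel S _ b (⟨w, hwS⟩ * v)
      have hc : (((⟨w, hwS⟩ : S) * v : S) : R) = w * ↑v := rfl
      have heq : b * φ (w * ↑v) = φ (w * y) := by
        rw [_root_.map_mul, show b * (φ w * φ ↑v) = φ w * (b * φ ↑v) by ring, hyv, ← _root_.map_mul]
      rw [hc, heq]
      exact Ideal.mem_radical_iff.mpr ⟨n, by rw [← _root_.map_pow]; exact Ideal.mem_map_of_mem _ hn⟩

end helpers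

section main
variable {R : Type*} [CommRing R] {S : Submonoid R} {I : Ideal R}

private lemma AtoC
    (h : ∃ s ∈ S, ∃ (m : ℕ) (Q : Fin m → Ideal R),
        (∀ i, IsSPrimary (S : Set R) (Q i)) ∧ I.colon (Ideal.span {s}) = ⨅ i, Q i) :
    (∃ (m : ℕ) (Q : Fin m → Ideal (Localization S)),
        (∀ i, (Q i).IsPrimary) ∧ I.map (algebraMap R (Localization S)) = ⨅ i, Q i) ∧
      ∃ t ∈ S, {x : R | ∃ s ∈ S, x * s ∈ I} = (I.colon (Ideal.span {t}) : Set R) := by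
  obtain ⟨s, hs, m, Q, hQ, hcol⟩ := h
  set φ := algebraMap R (Localization S) with hφ
  have hIle : ∀ i, I ≤ Q i := by
    intro i x hx
    have hx' : x ∈ I.colon (Ideal.span {s}) := Ideal.mem_colon_span_singleton.mpr (I.mul_mem_right s hx)
    rw [hcol] at hx'
    exact (Submodule.mem_iInf _).mp hx' i
  choose w hwS hw using fun i => (hQ i).2
  constructor
  · refine ⟨m, fun i => (Q i).map φ, fun i => map_isPrimary S (hQ i), ?_⟩
    apply le_antisymm
    · exact le_iInf fun i => Ideal.map_mono (hIle i)
    · intro z hz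
      obtain ⟨⟨x, v⟩, hxv⟩ := IsLocalization.surj (M := S) z
      choose t htS htQ using fun i => (algMem_iff S (Q i) x).mp
        (by rw [← hxv]; exact Ideal.mul_mem_right _ _ ((Submodule.mem_iInf _).mp hz i))
      set σ := ∏ j, t j with hσ
      have hσS : σ ∈ S := Submonoid.prod_mem S fun j _ => htS j
      have hxσ : x * σ ∈ I.colon (Ideal.span {s}) := by
        rw [hcol, Submodule.mem_iInf]
        intro i
        exact mul_prod_mem (Q i) t x i (by rw [mul_comm]; exact htQ i)
      have hI : (x * σ) * s ∈ I := Ideal.mem_colon_span_singleton.mp hxσ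
      apply unit_cancel S _ z (v * ⟨σ * s, mul_mem hσS hs⟩)
      have hc : ((v * (⟨σ * s, mul_mem hσS hs⟩ : S) : S) : R) = ↑v * (σ * s) := rfl
      have heq : z * φ (↑v * (σ * s)) = φ (x * σ * s) := by
        rw [_root_.map_mul, ← mul_assoc, hxv, ← _root_.map_mul, mul_assoc]
      rw [hc, heq]
      exact Ideal.mem_map_of_mem _ hI
  · set σ := ∏ j, w j with hσ
    have hσS : σ ∈ S := Submonoid.prod_mem S fun j _ => hwS j
    refine ⟨s * σ, mul_mem hs hσS, ?_⟩
    apply Set.ext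
    intro x
    simp only [Set.mem_setOf_eq, SetLike.mem_coe, Ideal.mem_colon_span_singleton]
    constructor
    · rintro ⟨u, huS, hxu⟩
      have h2 : ∀ i, w i * x ∈ Q i := by
        intro i
        rcases hw i x u (hIle i hxu) with h | h
        · exact h
        · exact absurd h (radical_disjoint S (hQ i).1 (mul_mem (hwS i) huS))
      have h3 : x * σ ∈ ⨅ i, Q i := by
        rw [Submodule.mem_iInf]
        intro i
        exact mul_prod_mem (Q i) w x i (by rw [mul_comm]; exact h2 i)
      rw [← hcol] at h3
      have := Ideal.mem_colon_span_singleton.mp h3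
      rwa [show x * σ * s = x * (s * σ) by ring] at this
    · intro hx
      exact ⟨s * σ, mul_mem hs hσS, hx⟩

private lemma CtoB
    (h : (∃ (m : ℕ) (Q : Fin m → Ideal (Localization S)),
          (∀ i, (Q i).IsPrimary) ∧ I.map (algebraMap R (Localization S)) = ⨅ i, Q i) ∧
        ∃ t ∈ S, {x : R | ∃ s ∈ S, x * s ∈ I} = (I.colon (Ideal.span {t}) : Set R)) :
    ∃ s' ∈ S, ∃ (m : ℕ) (Q : Fin m → Ideal R),
        (∀ i, (Q i).IsPrimary) ∧ I.colon (Ideal.span {s'}) = ⨅ i, Q i := by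
  obtain ⟨⟨m, Q, hQ, hmap⟩, t, htS, hsat⟩ := h
  set φ := algebraMap R (Localization S) with hφ
  refine ⟨t, htS, m, fun i => (Q i).comap φ, fun i => ?_, ?_⟩
  · obtain ⟨hne, hprim⟩ := Ideal.isPrimary_iff.mp (hQ i)
    show ((Q i).comap φ).IsPrimary
    rw [Ideal.isPrimary_iff]
    constructor
    · intro htop
      have h1 : (1 : R) ∈ (Q i).comap φ := by rw [htop]; trivial
      exact hne (Ideal.eq_top_iff_one _ |>.mpr (by simpa using h1))
    · intro a b hab
      have hmul : φ a * φ b ∈ Q i := by rw [← _root_.map_mul]; exact hab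
      rcases hprim hmul with h | h
      · exact Or.inl h
      · right
        obtain ⟨n, hn⟩ := Ideal.mem_radical_iff.mp h
        exact Ideal.mem_radical_iff.mpr ⟨n, by rw [Ideal.mem_comap, _root_.map_pow]; exact hn⟩
  · ext x
    rw [Submodule.mem_iInf]
    have hx := Set.ext_iff.mp hsat x
    simp only [Set.mem_setOf_eq, SetLike.mem_coe] at hx
    constructor
    · intro h i
      have h1 : φ x ∈ I.map φ := (algMem_iff S I x).mpr
        ⟨t, htS, by rw [mul_comm]; exact Ideal.mem_colon_span_singleton.mp h⟩
      rw [hmap] at h1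
      exact Ideal.mem_comap.mpr ((Submodule.mem_iInf _).mp h1 i)
    · intro h
      have h1 : φ x ∈ I.map φ := by
        rw [hmap, Submodule.mem_iInf]; exact fun i => h i
      obtain ⟨u, huS, hux⟩ := (algMem_iff S I x).mp h1
      exact hx.mp ⟨u, huS, by rwa [mul_comm]⟩

private lemma BtoA
    (h : ∃ s' ∈ S, ∃ (m : ℕ) (Q : Fin m → Ideal R),
        (∀ i, (Q i).IsPrimary) ∧ I.colon (Ideal.span {s'}) = ⨅ i, Q i) :
    ∃ s ∈ S, ∃ (m : ℕ) (Q : Fin m → Ideal R),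
        (∀ i, IsSPrimary (S : Set R) (Q i)) ∧ I.colon (Ideal.span {s}) = ⨅ i, Q i := by
  classical
  obtain ⟨s, hs, m, Q, hQ, hcol⟩ := h
  set p : Fin m → Prop := fun i => ∃ w ∈ S, w ∈ (Q i).radical with hp
  have hchoice : ∀ i, p i → ∃ u, u ∈ S ∧ u ∈ Q i := by
    rintro i ⟨w, hwS, hwr⟩
    obtain ⟨n, hn⟩ := Ideal.mem_radical_iff.mp hwr
    exact ⟨w ^ n, pow_mem hwS n, hn⟩
  set g : Fin m → R := fun i => if h : p i then (hchoice i h).choose else 1 with hg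
  have hgS : ∀ i, g i ∈ S := by
    intro i
    rw [hg]; dsimp only
    split
    · exact (hchoice i ‹_›).choose_spec.1
    · exact one_mem S
  have hgQ : ∀ i, p i → g i ∈ Q i := by
    intro i hi
    rw [hg]; dsimp only
    rw [dif_pos hi]
    exact (hchoice i hi).choose_spec.2
  set σ := ∏ j, g j with hσ
  have hσS : σ ∈ S := Submonoid.prod_mem S fun j _ => hgS j
  have hσnot : ∀ i, ¬ p i → σ ∉ (Q i).radical := by
    intro i hpi hmem
    haveI hpr : ((Q i).radical).IsPrime := Ideal.isPrime_radical (hQ i)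
    obtain ⟨j, _, hj⟩ := Ideal.IsPrime.prod_mem_iff.mp hmem
    exact hpi ⟨g j, hgS j, hj⟩
  let κ := {i : Fin m // ¬ p i}
  refine ⟨s * σ, mul_mem hs hσS, Fintype.card κ,
    fun j => Q ((Fintype.equivFin κ).symm j).1, fun j => ?_, ?_⟩
  · set i := (Fintype.equivFin κ).symm j with hi
    constructor
    · rw [Set.disjoint_left]
      intro x hxQ hxS
      exact i.2 ⟨x, hxS, Ideal.le_radical hxQ⟩
    · refine ⟨1, one_mem S, fun a b hab => ?_⟩
      rcases (Ideal.isPrimary_iff.mp (hQ i.1)).2 hab with h | h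
      · exact Or.inl (by rwa [one_mul])
      · exact Or.inr (by rwa [one_mul])
  · ext x
    rw [Ideal.mem_colon_span_singleton, Submodule.mem_iInf]
    constructor
    · intro hx j
      set i := (Fintype.equivFin κ).symm j with hi
      have h1 : x * σ ∈ I.colon (Ideal.span {s}) :=
        Ideal.mem_colon_span_singleton.mpr (by rwa [show x * σ * s = x * (s * σ) by ring])
      rw [hcol] at h1
      have h2 : x * σ ∈ Q i.1 := (Submodule.mem_iInf _).mp h1 i.1
      exact ((Ideal.isPrimary_iff.mp (hQ i.1)).2 h2).resolve_right (hσnot i.1 i.2)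
    · intro hx
      have h1 : ∀ i : Fin m, x * σ ∈ Q i := by
        intro i
        by_cases hpi : p i
        · exact mul_prod_mem (Q i) g x i ((Q i).mul_mem_left x (hgQ i hpi))
        · have hxQ : x ∈ Q i := by
            have := hx ((Fintype.equivFin κ) ⟨i, hpi⟩)
            simpa using this
          exact Ideal.mul_mem_right _ _ hxQ
      have h2 : x * σ ∈ I.colon (Ideal.span {s}) := by
        rw [hcol, Submodule.mem_iInf]; exact h1
      have := Ideal.mem_colon_span_singleton.mp h2
      rwa [show x * σ * s = x * (s * σ) by ring] at this

end main

theorem stmt_12 {R : Type*} [CommRing R] (S : Submonoid R)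
    (I : Ideal R) (hIS : Disjoint (I : Set R) (S : Set R)) :
    ((∃ s ∈ S, ∃ (m : ℕ) (Q : Fin m → Ideal R),
        (∀ i, IsSPrimary (S : Set R) (Q i)) ∧ I.colon (Ideal.span {s}) = ⨅ i, Q i) ↔
      (∃ s' ∈ S, ∃ (m : ℕ) (Q : Fin m → Ideal R),
        (∀ i, (Q i).IsPrimary) ∧ I.colon (Ideal.span {s'}) = ⨅ i, Q i)) ∧
    ((∃ s ∈ S, ∃ (m : ℕ) (Q : Fin m → Ideal R),
        (∀ i, IsSPrimary (S : Set R) (Q i)) ∧ I.colon (Ideal.span {s}) = ⨅ i, Q i) ↔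
      ((∃ (m : ℕ) (Q : Fin m → Ideal (Localization S)),
          (∀ i, (Q i).IsPrimary) ∧ I.map (algebraMap R (Localization S)) = ⨅ i, Q i) ∧
        ∃ t ∈ S, {x : R | ∃ s ∈ S, x * s ∈ I} = (I.colon (Ideal.span {t}) : Set R))) := by
  exact ⟨⟨fun hA => CtoB (AtoC hA), fun hB => BtoA hB⟩,
    ⟨fun hA => AtoC hA, fun hC => BtoA (CtoB hC)⟩⟩
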